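/- Let b > 0. Then there exists ε₀ > 0 such that for every ε ∈ (0, ε₀), the 2×2 real symmetric matrices M_ε(P) and M_ε(−P), where P = [[1, 0],[b, 1]], are both negative definite (so each has signature −2). -/

import Mathlib

open Matrix

/-- `M_ε(P) = Pᵀ S⁻(ε) P + S⁺(ε)` for `2 × 2` matrices, where
`S⁻(ε) = [[sin 2ε, −cos 2ε], [−cos 2ε, −sin 2ε]]` and
`S⁺(ε) = [[sin 2ε, cos 2ε], [cos 2ε, −sin 2ε]]`. -/
noncomputable def Meps2 (ε : ℝ) (P : Matrix (Fin 2) (Fin 2) ℝ) : Matrix (Fin 2) (Fin 2) ℝ :=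
  Pᵀ * !![Real.sin (2 * ε), -Real.cos (2 * ε); -Real.cos (2 * ε), -Real.sin (2 * ε)] * P
    + !![Real.sin (2 * ε), Real.cos (2 * ε); Real.cos (2 * ε), -Real.sin (2 * ε)]

lemma posdef2 (a c d : ℝ) (ha : 0 < a) (hdet : 0 < a * d - c * c) :
    (!![a, c; c, d]).PosDef := by
  rw [posDef_iff_dotProduct_mulVec]
  constructor
  · ext i j; fin_cases i <;> fin_cases j <;> simp [Matrix.conjTranspose_apply]
  · intro x hx
    have h0 : x 0 ≠ 0 ∨ x 1 ≠ 0 := by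
      by_contra h
      push_neg at h
      apply hx; ext i; fin_cases i <;> simp [h.1, h.2]
    have : star x ⬝ᵥ (!![a, c; c, d] *ᵥ x)
        = a * x 0 * x 0 + 2 * c * x 0 * x 1 + d * x 1 * x 1 := by
      simp [dotProduct, Matrix.mulVec, Fin.sum_univ_two]; ring
    rw [this]
    rcases h0 with h | h
    · rcases eq_or_ne (x 1) 0 with h1 | h1
      · rw [h1]; nlinarith [mul_pos ha (mul_self_pos.2 h)]
      · nlinarith [sq_nonneg (a * x 0 + c * x 1), mul_pos hdet (mul_self_pos.2 h1)]
    · nlinarith [sq_nonneg (a * x 0 + c * x 1), mul_pos hdet (mul_self_pos.2 h)]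

/-- A real symmetric matrix is negative definite iff its negative is positive definite. -/
theorem stmt_17 (b : ℝ) (hb : 0 < b) :
    ∃ ε₀ > (0 : ℝ), ∀ ε : ℝ, 0 < ε → ε < ε₀ →
      (-(Meps2 ε !![1, 0; b, 1])).PosDef ∧ (-(Meps2 ε (-!![1, 0; b, 1]))).PosDef := by
  refine ⟨min (Real.pi / 6) (b / (2 * (b ^ 2 + 5))), ?_, ?_⟩
  · exact lt_min (by positivity) (by positivity)
  intro ε hε hε'
  set s := Real.sin (2 * ε) with hs_def
  set c := Real.cos (2 * ε) with hc_def
  have hεπ : ε < Real.pi / 6 := lt_of_lt_of_le hε' (min_le_left _ _)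
  have hεb : ε < b / (2 * (b ^ 2 + 5)) := lt_of_lt_of_le hε' (min_le_right _ _)
  have h2ε : 0 < 2 * ε := by linarith
  have h2επ : 2 * ε < Real.pi / 3 := by linarith
  have hπ : (3:ℝ) < Real.pi := by
    have := Real.pi_gt_d6; linarith
  have hs_pos : 0 < s := Real.sin_pos_of_pos_of_lt_pi h2ε (by linarith)
  have hs_lt : s < 2 * ε := Real.sin_lt h2ε
  have hsb : s < b / (b ^ 2 + 5) := by
    have : 2 * ε < 2 * (b / (2 * (b ^ 2 + 5))) := by linarith
    have hb5 : 0 < b ^ 2 + 5 := by positivity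
    calc s < 2 * ε := hs_lt
      _ < 2 * (b / (2 * (b ^ 2 + 5))) := this
      _ = b / (b ^ 2 + 5) := by field_simp
  have hc_half : 1 / 2 < c := by
    have : Real.cos (Real.pi / 3) = 1 / 2 := Real.cos_pi_div_three
    rw [← this]
    apply Real.cos_lt_cos_of_nonneg_of_le_pi (by linarith) (by linarith) h2επ
  -- key inequalities
  have hb5 : 0 < b ^ 2 + 5 := by positivity
  have h3 : b / (b ^ 2 + 5) ≤ b / 2 := by
    rw [div_le_div_iff₀ hb5 (by norm_num)]
    nlinarith
  have hbs : 0 < b ^ 2 * s := mul_pos (by positivity) hs_pos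
  have hkey1 : 0 < b ^ 2 * s + 2 * b * c - 2 * s := by
    have h1 : b < 2 * b * c := by nlinarith
    nlinarith
  have hkey2 : 0 < b ^ 2 * s + 4 * b * c - 4 * s := by
    have h1 : 2 * b < 4 * b * c := by nlinarith
    nlinarith
  have hM : -(Meps2 ε !![1, 0; b, 1]) =
      !![b ^ 2 * s + 2 * b * c - 2 * s, b * s; b * s, 2 * s] := by
    have hT : (!![1, 0; b, 1] : Matrix (Fin 2) (Fin 2) ℝ)ᵀ = !![1, b; 0, 1] := by
      ext i j; fin_cases i <;> fin_cases j <;> rfl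
    ext i j
    fin_cases i <;> fin_cases j <;>
      simp [Meps2, hT, Matrix.mul_apply, Fin.sum_univ_two, hs_def, hc_def] <;> ring
  have hMneg : Meps2 ε (-!![1, 0; b, 1]) = Meps2 ε !![1, 0; b, 1] := by
    unfold Meps2
    simp only [Matrix.transpose_neg, Matrix.neg_mul, Matrix.mul_neg, neg_neg]
  have hpd : (!![b ^ 2 * s + 2 * b * c - 2 * s, b * s; b * s, 2 * s]).PosDef := by
    apply posdef2 _ _ _ hkey1
    nlinarith [mul_pos hs_pos hkey2]
  exact ⟨hM ▸ hpd, by rw [hMneg, hM]; exact hpd⟩
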